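/- Suppose there exists an optimal solution (x*, y*) of (P) such that the value function V is calm at x* with penalty threshold λ*. Then: (i) if (x̄, ȳ, ū, ᾱ, λ̄) minimizes φ_τ, then (x̄, ȳ) is an optimal solution of (P); and (ii) for every λ ∈ [λ*, ∞), the point (x*, y*, 0, 0, λ) minimizes φ_τ. -/

import Mathlib

open Filter Topology Metric Set

attribute [local instance] Classical.propDecidable

noncomputable section

/-- `ℝ^n` with the Euclidean norm. -/
abbrev Rn (n : ℕ) : Type := EuclideanSpace ℝ (Fin n)

variable {n m : ℕ} {Q : Type*} [NormedAddCommGroup Q]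

/-- `(x, y)` is feasible in the bilevel problem (P): `x ∈ X` and
`y ∈ τ-argmin_{z ∈ Y} { g(x,z) | H(x,z) ∈ D }`. -/
def PFeas (X : Set (Rn n)) (Y : Set (Rn m)) (D : Set Q)
    (g : Rn n × Rn m → ℝ) (H : Rn n × Rn m → Q) (τ : ℝ)
    (x : Rn n) (y : Rn m) : Prop :=
  x ∈ X ∧ y ∈ Y ∧ H (x, y) ∈ D ∧
    ∀ z ∈ Y, H (x, z) ∈ D → g (x, y) ≤ g (x, z) + τ

/-- The minimum value `𝔪` of (P). -/
def PVal (X : Set (Rn n)) (Y : Set (Rn m)) (D : Set Q)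
    (f : Rn n × Rn m → EReal) (g : Rn n × Rn m → ℝ) (H : Rn n × Rn m → Q)
    (τ : ℝ) : EReal :=
  ⨅ (x : Rn n) (y : Rn m) (_ : PFeas X Y D g H τ x y), f (x, y)

/-- Optimal solution of (P): feasible, finite objective value attaining `𝔪`. -/
def POpt (X : Set (Rn n)) (Y : Set (Rn m)) (D : Set Q)
    (f : Rn n × Rn m → EReal) (g : Rn n × Rn m → ℝ) (H : Rn n × Rn m → Q)
    (τ : ℝ) (x : Rn n) (y : Rn m) : Prop :=
  PFeas X Y D g H τ x y ∧ f (x, y) ≠ ⊤ ∧ f (x, y) = PVal X Y D f g H τ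

/-- Feasibility in the alternative problem (P)^ν with data `Yn, gn, Hn, lamBar, τn`. -/
def PnuFeas (X : Set (Rn n)) (Y : Set (Rn m)) (D : Set Q) (Yn : Set (Rn m))
    (gn : Rn n × Rn m → ℝ) (Hn : Rn n × Rn m → Q) (lamBar τn : ℝ)
    (x : Rn n) (y : Rn m) (u : Q) (α lam : ℝ) : Prop :=
  x ∈ X ∧ y ∈ Y ∧ α ≤ 0 ∧ 0 ≤ lam ∧ lam ≤ lamBar ∧ Hn (x, y) + u ∈ D ∧
    ∀ z ∈ Yn, gn (x, y) + α ≤ gn (x, z) + lam * infDist (Hn (x, z)) D + τn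

/-- Objective function of (P)^ν: `f^ν(x,y) + σ^ν ‖u‖ - θ^ν α`. -/
def PnuObj (fn : Rn n × Rn m → EReal) (σn θn : ℝ)
    (x : Rn n) (y : Rn m) (u : Q) (α : ℝ) : EReal :=
  fn (x, y) + ((σn * ‖u‖ - θn * α : ℝ) : EReal)

/-- The minimum value `𝔪^ν` of (P)^ν. -/
def PnuVal (X : Set (Rn n)) (Y : Set (Rn m)) (D : Set Q) (Yn : Set (Rn m))
    (fn : Rn n × Rn m → EReal) (gn : Rn n × Rn m → ℝ) (Hn : Rn n × Rn m → Q)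
    (σn θn lamBar τn : ℝ) : EReal :=
  ⨅ (x : Rn n) (y : Rn m) (u : Q) (α : ℝ) (lam : ℝ)
    (_ : PnuFeas X Y D Yn gn Hn lamBar τn x y u α lam),
    PnuObj fn σn θn x y u α

/-- `ε`-optimal solution of (P)^ν: feasible with finite objective value at most `𝔪^ν + ε`. -/
def PnuEps (X : Set (Rn n)) (Y : Set (Rn m)) (D : Set Q) (Yn : Set (Rn m))
    (fn : Rn n × Rn m → EReal) (gn : Rn n × Rn m → ℝ) (Hn : Rn n × Rn m → Q)
    (σn θn lamBar τn ε : ℝ)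
    (x : Rn n) (y : Rn m) (u : Q) (α lam : ℝ) : Prop :=
  PnuFeas X Y D Yn gn Hn lamBar τn x y u α lam ∧
    PnuObj fn σn θn x y u α ≠ ⊤ ∧
    PnuObj fn σn θn x y u α ≤ PnuVal X Y D Yn fn gn Hn σn θn lamBar τn + (ε : EReal)

/-- The value function `V(x,u) = inf_{y ∈ Y} { g(x,y) | H(x,y) + u ∈ D }`. -/
def Vfun (Y : Set (Rn m)) (D : Set Q)
    (g : Rn n × Rn m → ℝ) (H : Rn n × Rn m → Q)
    (x : Rn n) (u : Q) : EReal :=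
  ⨅ (y : Rn m) (_ : y ∈ Y ∧ H (x, y) + u ∈ D), (g (x, y) : EReal)

/-- The value function `V` is calm at `x` with penalty threshold `lam`. -/
def CalmAtWith (Y : Set (Rn m)) (D : Set Q)
    (g : Rn n × Rn m → ℝ) (H : Rn n × Rn m → Q)
    (x : Rn n) (lam : ℝ) : Prop :=
  0 ≤ lam ∧ ∀ u : Q,
    Vfun Y D g H x 0 - ((lam * ‖u‖ : ℝ) : EReal) ≤ Vfun Y D g H x u

/-- The value function `V` is calm at `x`. -/
def CalmAt (Y : Set (Rn m)) (D : Set Q)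
    (g : Rn n × Rn m → ℝ) (H : Rn n × Rn m → Q) (x : Rn n) : Prop :=
  ∃ lam : ℝ, CalmAtWith Y D g H x lam

/-- The value function `V` is locally calm at `xbar`. -/
def LocallyCalmAt (Y : Set (Rn m)) (D : Set Q)
    (g : Rn n × Rn m → ℝ) (H : Rn n × Rn m → Q) (xbar : Rn n) : Prop :=
  ∃ lam ρ : ℝ, 0 ≤ lam ∧ 0 < ρ ∧
    ∀ x ∈ Metric.closedBall xbar ρ, ∀ u : Q,
      Vfun Y D g H x 0 - ((lam * ‖u‖ : ℝ) : EReal) ≤ Vfun Y D g H x u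

/-- The penalty-based value function `μ(x,λ) = inf_{y ∈ S} [g(x,y) + λ dist(H(x,y), D)]`. -/
def muSet (S : Set (Rn m)) (D : Set Q)
    (g : Rn n × Rn m → ℝ) (H : Rn n × Rn m → Q)
    (x : Rn n) (lam : ℝ) : EReal :=
  ⨅ (y : Rn m) (_ : y ∈ S), ((g (x, y) + lam * infDist (H (x, y)) D : ℝ) : EReal)

/-- The Basic Assumption (Assumption 2.1). -/
structure BasicAssumption (X : Set (Rn n)) (Y : Set (Rn m)) (D : Set Q)
    (Yν : ℕ → Set (Rn m))
    (f : Rn n × Rn m → EReal) (fν : ℕ → Rn n × Rn m → EReal)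
    (g : Rn n × Rn m → ℝ) (gν : ℕ → Rn n × Rn m → ℝ)
    (H : Rn n × Rn m → Q) (Hν : ℕ → Rn n × Rn m → Q)
    (σ θ lamBar τν δ η : ℕ → ℝ) : Prop where
  X_nonempty : X.Nonempty
  X_closed : IsClosed X
  Y_nonempty : Y.Nonempty
  Y_closed : IsClosed Y
  D_nonempty : D.Nonempty
  D_closed : IsClosed D
  Yν_nonempty : ∀ ν, (Yν ν).Nonempty
  Yν_subset : ∀ ν, Yν ν ⊆ Y
  Yν_conv : ∀ y : Rn m,
    Tendsto (fun ν => infDist y (Yν ν)) atTop (𝓝 (infDist y Y))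
  δ_lim : Tendsto δ atTop (𝓝 0)
  g_err : ∀ ν, ∀ x ∈ X, ∀ y ∈ Y, |gν ν (x, y) - g (x, y)| ≤ δ ν
  g_cont : ContinuousOn g (X ×ˢ Y)
  η_lim : Tendsto η atTop (𝓝 0)
  H_err : ∀ ν, ∀ x ∈ X, ∀ y ∈ Y,
    |infDist (Hν ν (x, y)) D - infDist (H (x, y)) D| ≤ η ν
  H_cont : ContinuousOn H (X ×ˢ Y)
  f_ne_bot : ∀ p, f p ≠ ⊥
  fν_ne_bot : ∀ ν p, fν ν p ≠ ⊥
  f_limsup : ∀ x ∈ X, ∀ y ∈ Y,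
    limsup (fun ν => fν ν (x, y)) atTop ≤ f (x, y)
  f_liminf : ∀ x ∈ X, ∀ y ∈ Y, ∀ (xs : ℕ → Rn n) (ys : ℕ → Rn m),
    (∀ ν, xs ν ∈ X) → (∀ ν, ys ν ∈ Y) →
    Tendsto xs atTop (𝓝 x) → Tendsto ys atTop (𝓝 y) →
    f (x, y) ≤ liminf (fun ν => fν ν (xs ν, ys ν)) atTop
  σ_nonneg : ∀ ν, 0 ≤ σ ν
  θ_nonneg : ∀ ν, 0 ≤ θ ν
  lamBar_nonneg : ∀ ν, 0 ≤ lamBar ν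
  τν_nonneg : ∀ ν, 0 ≤ τν ν
  lamBar_top : Tendsto lamBar atTop atTop
  ση_lim : Tendsto (fun ν => σ ν * η ν) atTop (𝓝 0)
  θlamη_lim : Tendsto (fun ν => θ ν * lamBar ν * η ν) atTop (𝓝 0)
  θδ_lim : Tendsto (fun ν => θ ν * δ ν) atTop (𝓝 0)

/-- The extended real-valued representation `φ^ν` of (P)^ν. -/
def phiNu (X : Set (Rn n)) (Y : Set (Rn m)) (D : Set Q) (Yn : Set (Rn m))
    (fn : Rn n × Rn m → EReal) (gn : Rn n × Rn m → ℝ) (Hn : Rn n × Rn m → Q)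
    (σn θn lamBar τn : ℝ)
    (x : Rn n) (y : Rn m) (u : Q) (α lam : ℝ) : EReal :=
  if x ∈ X ∧ y ∈ Y ∧ α ≤ 0 ∧ 0 ≤ lam ∧ lam ≤ lamBar ∧ Hn (x, y) + u ∈ D ∧
      ((gn (x, y) + α : ℝ) : EReal) ≤ muSet Yn D gn Hn x lam + (τn : EReal)
  then fn (x, y) + ((σn * ‖u‖ - θn * α : ℝ) : EReal) else ⊤

/-- The extended real-valued function `φ_β` representing a restriction of (P). -/
def phiBeta (X : Set (Rn n)) (Y : Set (Rn m)) (D : Set Q)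
    (f : Rn n × Rn m → EReal) (g : Rn n × Rn m → ℝ) (H : Rn n × Rn m → Q)
    (β : ℝ)
    (x : Rn n) (y : Rn m) (u : Q) (α lam : ℝ) : EReal :=
  if x ∈ X ∧ y ∈ Y ∧ u = 0 ∧ α = 0 ∧ 0 ≤ lam ∧ H (x, y) ∈ D ∧
      (g (x, y) : EReal) ≤ muSet Y D g H x lam + (β : EReal)
  then f (x, y) else ⊤

/-- `inf φ_τ`, the infimum of `φ_τ` over all `(x, y, u, α, λ)`. -/
def phiBetaInf (X : Set (Rn n)) (Y : Set (Rn m)) (D : Set Q)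
    (f : Rn n × Rn m → EReal) (g : Rn n × Rn m → ℝ) (H : Rn n × Rn m → Q)
    (β : ℝ) : EReal :=
  ⨅ (x : Rn n) (y : Rn m) (u : Q) (α : ℝ) (lam : ℝ),
    phiBeta X Y D f g H β x y u α lam

/-- Lemma 5.5(b,c): minimizers of `φ_τ` yield optimal solutions of (P), and
`(x*, y*, 0, 0, λ)` minimizes `φ_τ` for every `λ ≥ λ*`. -/
theorem phiTau_minimizers
    [NormedSpace ℝ Q] [FiniteDimensional ℝ Q]
    (X : Set (Rn n)) (Y : Set (Rn m)) (D : Set Q)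
    (f : Rn n × Rn m → EReal) (g : Rn n × Rn m → ℝ) (H : Rn n × Rn m → Q)
    (τ : ℝ) (hτ : 0 ≤ τ)
    (hXne : X.Nonempty) (hYne : Y.Nonempty) (hDne : D.Nonempty)
    (hf_bot : ∀ p, f p ≠ ⊥)
    (xstar : Rn n) (ystar : Rn m) (lamstar : ℝ)
    (hopt : POpt X Y D f g H τ xstar ystar)
    (hcalm : CalmAtWith Y D g H xstar lamstar) :
    (∀ (xb : Rn n) (yb : Rn m) (ub : Q) (αb lamb : ℝ),
      phiBeta X Y D f g H τ xb yb ub αb lamb = phiBetaInf X Y D f g H τ →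
      phiBeta X Y D f g H τ xb yb ub αb lamb ≠ ⊤ →
      POpt X Y D f g H τ xb yb) ∧
    (∀ lam : ℝ, lamstar ≤ lam →
      phiBeta X Y D f g H τ xstar ystar 0 0 lam = phiBetaInf X Y D f g H τ ∧
      phiBeta X Y D f g H τ xstar ystar 0 0 lam ≠ ⊤) := by
  obtain ⟨⟨hxX, hyY, hHD, hmin⟩, hfne, hfval⟩ := hopt
  obtain ⟨hlam0, hcalmV⟩ := hcalm
  -- bounds on the value function at (xstar, 0)
  have hV0_le : Vfun Y D g H xstar 0 ≤ ((g (xstar, ystar) : ℝ) : EReal) := by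
    unfold Vfun
    exact iInf₂_le ystar ⟨hyY, by simpa using hHD⟩
  have hle_V0 : ((g (xstar, ystar) - τ : ℝ) : EReal) ≤ Vfun Y D g H xstar 0 := by
    unfold Vfun
    refine le_iInf₂ fun z hz => ?_
    have hz2 : H (xstar, z) ∈ D := by simpa using hz.2
    have := hmin z hz.1 hz2
    exact EReal.coe_le_coe_iff.mpr (by linarith)
  have hVne_top : Vfun Y D g H xstar 0 ≠ ⊤ := by
    intro h
    rw [h] at hV0_le
    exact (EReal.coe_ne_top _) (top_le_iff.mp hV0_le)
  have hVne_bot : Vfun Y D g H xstar 0 ≠ ⊥ := by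
    intro h
    rw [h] at hle_V0
    exact (EReal.coe_ne_bot _) (le_bot_iff.mp hle_V0)
  set v := (Vfun Y D g H xstar 0).toReal with hvdef
  have hVv : ((v : ℝ) : EReal) = Vfun Y D g H xstar 0 := EReal.coe_toReal hVne_top hVne_bot
  -- v lower-bounds the penalty value function for lam ≥ lamstar
  have hmu : ∀ lam : ℝ, lamstar ≤ lam → ((v : ℝ) : EReal) ≤ muSet Y D g H xstar lam := by
    intro lam hlam
    have hlamnn : (0:ℝ) ≤ lam := hlam0.trans hlam
    unfold muSet
    refine le_iInf₂ fun z hzY => ?_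
    rw [EReal.coe_le_coe_iff]
    refine le_of_forall_pos_le_add fun ε hε => ?_
    have hlamp : (0:ℝ) < lam + 1 := by linarith
    have hd0 : Metric.infDist (H (xstar, z)) D <
        Metric.infDist (H (xstar, z)) D + ε / (lam + 1) := by
      have : (0:ℝ) < ε / (lam + 1) := div_pos hε hlamp
      linarith
    obtain ⟨d, hdD, hdist⟩ := (Metric.infDist_lt_iff hDne).mp hd0
    set u : Q := d - H (xstar, z) with hu
    have hVu : Vfun Y D g H xstar u ≤ ((g (xstar, z) : ℝ) : EReal) := by
      unfold Vfun
      refine iInf₂_le z ⟨hzY, ?_⟩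
      show H (xstar, z) + (d - H (xstar, z)) ∈ D
      simpa using hdD
    have hcu := hcalmV u
    rw [← hVv, ← EReal.coe_sub] at hcu
    have hreal : v - lamstar * ‖u‖ ≤ g (xstar, z) :=
      EReal.coe_le_coe_iff.mp (hcu.trans hVu)
    have hnu : ‖u‖ < Metric.infDist (H (xstar, z)) D + ε / (lam + 1) := by
      have : ‖u‖ = dist (H (xstar, z)) d := by
        rw [hu, dist_comm, dist_eq_norm]
      rw [this]; exact hdist
    have h1 : lamstar * ‖u‖ ≤ lam * ‖u‖ :=
      mul_le_mul_of_nonneg_right hlam (norm_nonneg u)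
    have h2 : lam * ‖u‖ ≤ lam * (Metric.infDist (H (xstar, z)) D + ε / (lam + 1)) :=
      mul_le_mul_of_nonneg_left hnu.le hlamnn
    have hdiv : lam * (ε / (lam + 1)) ≤ ε := by
      rw [mul_div_assoc', div_le_iff₀ hlamp]; nlinarith
    have hexp : lam * (Metric.infDist (H (xstar, z)) D + ε / (lam + 1))
        = lam * Metric.infDist (H (xstar, z)) D + lam * (ε / (lam + 1)) := by ring
    linarith [hexp ▸ h2]
  -- key inequality for feasibility of the starred point
  have hkey : ∀ lam : ℝ, lamstar ≤ lam →
      ((g (xstar, ystar) : ℝ) : EReal) ≤ muSet Y D g H xstar lam + (τ : EReal) := by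
    intro lam hlam
    have h1 : g (xstar, ystar) - τ ≤ v := by
      have := hle_V0
      rw [← hVv, EReal.coe_le_coe_iff] at this
      exact this
    have h2 : ((g (xstar, ystar) : ℝ) : EReal) ≤ ((v + τ : ℝ) : EReal) :=
      EReal.coe_le_coe_iff.mpr (by linarith)
    refine h2.trans ?_
    rw [EReal.coe_add]
    exact add_le_add_left (hmu lam hlam) _
  have hcondstar : ∀ lam : ℝ, lamstar ≤ lam →
      (xstar ∈ X ∧ ystar ∈ Y ∧ (0:Q) = 0 ∧ (0:ℝ) = 0 ∧ 0 ≤ lam ∧ H (xstar, ystar) ∈ D ∧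
        ((g (xstar, ystar) : ℝ) : EReal) ≤ muSet Y D g H xstar lam + (τ : EReal)) :=
    fun lam hlam => ⟨hxX, hyY, rfl, rfl, hlam0.trans hlam, hHD, hkey lam hlam⟩
  have hstar_eq : ∀ lam : ℝ, lamstar ≤ lam →
      phiBeta X Y D f g H τ xstar ystar 0 0 lam = f (xstar, ystar) :=
    fun lam hlam => if_pos (hcondstar lam hlam)
  -- phiBeta-feasible points are P-feasible
  have hfeas : ∀ (x : Rn n) (y : Rn m) (u : Q) (α lam : ℝ),
      (x ∈ X ∧ y ∈ Y ∧ u = 0 ∧ α = 0 ∧ 0 ≤ lam ∧ H (x, y) ∈ D ∧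
        ((g (x, y) : ℝ) : EReal) ≤ muSet Y D g H x lam + (τ : EReal)) →
      PFeas X Y D g H τ x y := by
    rintro x y u α lam ⟨h1, h2, -, -, hl, h6, h7⟩
    refine ⟨h1, h2, h6, fun z hzY hzD => ?_⟩
    have hmuz : muSet Y D g H x lam ≤ ((g (x, z) : ℝ) : EReal) := by
      have : muSet Y D g H x lam
          ≤ ((g (x, z) + lam * Metric.infDist (H (x, z)) D : ℝ) : EReal) := by
        unfold muSet; exact iInf₂_le z hzY
      simpa [Metric.infDist_zero_of_mem hzD] using this
    have hfin : ((g (x, y) : ℝ) : EReal) ≤ ((g (x, z) + τ : ℝ) : EReal) := by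
      refine h7.trans ?_
      rw [EReal.coe_add]
      exact add_le_add_left hmuz _
    exact EReal.coe_le_coe_iff.mp hfin
  -- PVal ≤ phiBetaInf
  have hPV_le : PVal X Y D f g H τ ≤ phiBetaInf X Y D f g H τ := by
    unfold phiBetaInf
    refine le_iInf fun x => le_iInf fun y => le_iInf fun u => le_iInf fun α =>
      le_iInf fun lam => ?_
    unfold phiBeta
    split_ifs with hc
    · unfold PVal
      exact iInf_le_of_le x (iInf_le_of_le y (iInf_le_of_le (hfeas x y u α lam hc) le_rfl))
    · exact le_top
  have hInf_le : phiBetaInf X Y D f g H τ ≤ f (xstar, ystar) := by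
    calc phiBetaInf X Y D f g H τ
        ≤ phiBeta X Y D f g H τ xstar ystar 0 0 lamstar := by
          unfold phiBetaInf
          exact iInf_le_of_le xstar (iInf_le_of_le ystar (iInf_le_of_le 0
            (iInf_le_of_le 0 (iInf_le _ lamstar))))
      _ = f (xstar, ystar) := hstar_eq lamstar le_rfl
  have hle' : f (xstar, ystar) ≤ phiBetaInf X Y D f g H τ := by
    rw [hfval]; exact hPV_le
  have hEq : phiBetaInf X Y D f g H τ = f (xstar, ystar) := le_antisymm hInf_le hle'
  have hEqPV : phiBetaInf X Y D f g H τ = PVal X Y D f g H τ := by rw [hEq, hfval]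
  constructor
  · intro xb yb ub αb lamb heq hne
    by_cases hc : xb ∈ X ∧ yb ∈ Y ∧ ub = 0 ∧ αb = 0 ∧ 0 ≤ lamb ∧ H (xb, yb) ∈ D ∧
        ((g (xb, yb) : ℝ) : EReal) ≤ muSet Y D g H xb lamb + (τ : EReal)
    · have hval : f (xb, yb) = phiBetaInf X Y D f g H τ := by
        rw [← heq]; exact (if_pos hc).symm
      refine ⟨hfeas _ _ _ _ _ hc, ?_, ?_⟩
      · rw [hval, hEq]; exact hfne
      · rw [hval, hEqPV]
    · exact absurd (if_neg hc) hne
  · intro lam hlam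
    refine ⟨?_, ?_⟩
    · rw [hstar_eq lam hlam]; exact hEq.symm
    · rw [hstar_eq lam hlam]; exact hfne
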